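/- Suppose L_r = ker_Z(Λ(A,B,r)) is positive (L_r ∩ N^{rn} = {0}). Let W, V ∈ L_r have equal Λ(A,B,r)-degree, i.e., Λ(A,B,r)·W^+ = Λ(A,B,r)·V^+. Then, viewing W and V as r×n matrices, the set of indices of nonzero rows of V is contained in the set of indices of nonzero rows of W; hence by symmetry the two sets are equal, and W and V have the same type. -/
import Mathlib


/-- Componentwise positive part of an integer vector. -/
def vpos {n : ℕ} (u : Fin n → ℤ) : Fin n → ℤ := fun i => max (u i) 0

/-- Suppose the kernel lattice of the generalized Lawrence lifting `Λ(A,B,r)` is positive.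
If `W, V ∈ ker_ℤ(Λ(A,B,r))` (viewed as `r×n` matrices: rows in `ker_ℤ(A)`, row sum in
`ker_ℤ(B)`) have the same `Λ(A,B,r)`-degree `Λ(A,B,r)·W⁺ = Λ(A,B,r)·V⁺`, then the nonzero
rows of `V` are among the nonzero rows of `W`; hence the two sets of indices coincide and
`W` and `V` have the same type. -/
theorem equal_degree_same_type {m n p r : ℕ} (hr : 2 ≤ r)
    (A : Matrix (Fin m) (Fin n) ℤ) (B : Matrix (Fin p) (Fin n) ℤ)
    (hposr : ∀ C : Fin r → Fin n → ℤ, (∀ j, A.mulVec (C j) = 0) →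
      B.mulVec (∑ j, C j) = 0 → (∀ j i, 0 ≤ C j i) → C = 0)
    (hposA : ∀ x : Fin n → ℤ, A.mulVec x = 0 → (∀ i, 0 ≤ x i) → x = 0)
    (W V : Fin r → Fin n → ℤ)
    (hWA : ∀ j, A.mulVec (W j) = 0) (hWB : B.mulVec (∑ j, W j) = 0)
    (hVA : ∀ j, A.mulVec (V j) = 0) (hVB : B.mulVec (∑ j, V j) = 0)
    (hdegA : ∀ j, A.mulVec (vpos (W j)) = A.mulVec (vpos (V j)))
    (hdegB : B.mulVec (∑ j, vpos (W j)) = B.mulVec (∑ j, vpos (V j))) :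
    {j | V j ≠ 0} ⊆ {j | W j ≠ 0} ∧ {j | V j ≠ 0} = {j | W j ≠ 0} := by
  have key : ∀ x : Fin n → ℤ, A.mulVec x = 0 → A.mulVec (vpos x) = 0 → x = 0 := by
    intro x hx hvx
    have hv0 : vpos x = 0 := hposA _ hvx (fun i => le_max_right _ _)
    have hle : ∀ i, x i ≤ 0 := by
      intro i
      have h := congrFun hv0 i
      simp only [vpos, Pi.zero_apply] at h
      omega
    have hneg : A.mulVec (-x) = 0 := by
      rw [Matrix.mulVec_neg, hx, neg_zero]
    have := hposA (-x) hneg (fun i => by simpa using hle i)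
    have : x = 0 := by
      funext i; have := congrFun this i; simpa [neg_eq_zero] using this
    exact this
  have hVW : ∀ j, W j = 0 → V j = 0 := by
    intro j hj
    apply key _ (hVA j)
    have : vpos (W j) = 0 := by
      funext i; simp [vpos, hj]
    rw [← hdegA j, this, Matrix.mulVec_zero]
  have hWV : ∀ j, V j = 0 → W j = 0 := by
    intro j hj
    apply key _ (hWA j)
    have : vpos (V j) = 0 := by
      funext i; simp [vpos, hj]
    rw [hdegA j, this, Matrix.mulVec_zero]
  constructor
  · intro j hj hw
    exact hj (hVW j hw)
  · ext j
    constructor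
    · intro hj hw; exact hj (hVW j hw)
    · intro hj hv; exact hj (hWV j hv)
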